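/- Let p be a prime and R a commutative ring. Define the truncated exponential [exp](z) = Σ_{i=0}^{p-1} z^i / i! (well-defined when the denominators i! for i < p are invertible or R is a ℤ_(p)-algebra). If a, b ∈ R and the ideal (a, b) satisfies (a,b)^p = 0, then [exp](a + b) = [exp](a) · [exp](b). -/

import Mathlib

/-- Let `p` be a prime and `R` a commutative ring in which the factorials
`i!` for `i < p` are invertible. Define the truncated exponential
`[exp](z) = Σ_{i=0}^{p-1} z^i / i!`. If `a, b ∈ R` and the ideal `(a, b)` generated by
`a` and `b` satisfies `(a,b)^p = 0`, then `[exp](a + b) = [exp](a) · [exp](b)`. -/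
theorem stmt_8 (p : ℕ) (hp : p.Prime) (R : Type) [CommRing R]
    (hinv : ∀ i < p, IsUnit ((i : ℕ).factorial : R))
    (a b : R) (hab : (Ideal.span {a, b} : Ideal R) ^ p = ⊥) :
    (∑ i ∈ Finset.range p, Ring.inverse ((i.factorial : R)) * (a + b) ^ i)
      = (∑ i ∈ Finset.range p, Ring.inverse ((i.factorial : R)) * a ^ i)
      * (∑ i ∈ Finset.range p, Ring.inverse ((i.factorial : R)) * b ^ i) := by
  have hzero : ∀ i j : ℕ, p ≤ i + j → a ^ i * b ^ j = 0 := by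
    intro i j hij
    have ha : a ∈ Ideal.span ({a, b} : Set R) := Ideal.subset_span (by simp)
    have hb : b ∈ Ideal.span ({a, b} : Set R) := Ideal.subset_span (by simp)
    have h1 : a ^ i * b ^ j ∈ (Ideal.span ({a, b} : Set R)) ^ (i + j) := by
      rw [pow_add]
      exact Ideal.mul_mem_mul (Ideal.pow_mem_pow ha i) (Ideal.pow_mem_pow hb j)
    have h2 : (Ideal.span ({a, b} : Set R)) ^ (i + j) ≤ (Ideal.span ({a, b} : Set R)) ^ p :=
      Ideal.pow_le_pow_right hij
    have h3 := h2 h1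
    rw [hab] at h3
    simpa using h3
  have hcoef : ∀ n k : ℕ, n < p → k ≤ n →
      Ring.inverse ((n.factorial : R)) * (n.choose k : R)
        = Ring.inverse (k.factorial : R) * Ring.inverse ((n - k).factorial : R) := by
    intro n k hn hk
    have hun : IsUnit ((n.factorial : R)) := hinv n hn
    have huk : IsUnit ((k.factorial : R)) := hinv k (lt_of_le_of_lt hk hn)
    have hunk : IsUnit (((n - k).factorial : R)) :=
      hinv _ (lt_of_le_of_lt (Nat.sub_le n k) hn)
    have key : ((n.choose k : R)) * (k.factorial : R) * ((n - k).factorial : R)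
        = (n.factorial : R) := by
      exact_mod_cast congrArg (Nat.cast : ℕ → R)
        (Nat.choose_mul_factorial_mul_factorial hk)
    have h1 : Ring.inverse ((n.factorial : R)) * (n.factorial : R) = 1 :=
      Ring.inverse_mul_cancel _ hun
    have h2 : Ring.inverse ((k.factorial : R)) * (k.factorial : R) = 1 :=
      Ring.inverse_mul_cancel _ huk
    have h3 : Ring.inverse (((n - k).factorial : R)) * ((n - k).factorial : R) = 1 :=
      Ring.inverse_mul_cancel _ hunk
    calc Ring.inverse ((n.factorial : R)) * (n.choose k : R)
        = Ring.inverse ((n.factorial : R)) *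
          ((Ring.inverse ((k.factorial : R)) * (k.factorial : R)) *
           (Ring.inverse (((n - k).factorial : R)) * ((n - k).factorial : R)) *
           (n.choose k : R)) := by rw [h2, h3]; ring
      _ = Ring.inverse ((k.factorial : R)) * Ring.inverse (((n - k).factorial : R)) *
          (Ring.inverse ((n.factorial : R)) *
            ((n.choose k : R) * (k.factorial : R) * ((n - k).factorial : R))) := by ring
      _ = Ring.inverse ((k.factorial : R)) * Ring.inverse (((n - k).factorial : R)) *
          (Ring.inverse ((n.factorial : R)) * (n.factorial : R)) := by rw [key]
      _ = Ring.inverse ((k.factorial : R)) * Ring.inverse (((n - k).factorial : R)) := by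
          rw [h1]; ring
  set F : ℕ × ℕ → R := fun x =>
    Ring.inverse ((x.1.factorial : R)) * a ^ x.1 *
      (Ring.inverse ((x.2.factorial : R)) * b ^ x.2) with hF
  have step1 : (∑ i ∈ Finset.range p, Ring.inverse ((i.factorial : R)) * (a + b) ^ i)
      = ∑ n ∈ Finset.range p, ∑ x ∈ Finset.HasAntidiagonal.antidiagonal n, F x := by
    refine Finset.sum_congr rfl fun n hn => ?_
    rw [Finset.Nat.sum_antidiagonal_eq_sum_range_succ_mk, add_pow, Finset.mul_sum]
    refine Finset.sum_congr rfl fun k hk => ?_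
    have hk' : k ≤ n := Nat.lt_succ_iff.mp (Finset.mem_range.mp hk)
    have hc := hcoef n k (Finset.mem_range.mp hn) hk'
    simp only [hF]
    calc Ring.inverse ((n.factorial : R)) * (a ^ k * b ^ (n - k) * (n.choose k : R))
        = (Ring.inverse ((n.factorial : R)) * (n.choose k : R)) * a ^ k * b ^ (n - k) := by
          ring
      _ = (Ring.inverse ((k.factorial : R)) * Ring.inverse (((n - k).factorial : R)))
            * a ^ k * b ^ (n - k) := by rw [hc]
      _ = Ring.inverse ((k.factorial : R)) * a ^ k *
            (Ring.inverse (((n - k).factorial : R)) * b ^ (n - k)) := by ring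
  have hdisj : (↑(Finset.range p) : Set ℕ).PairwiseDisjoint
      (fun n => (Finset.HasAntidiagonal.antidiagonal n : Finset (ℕ × ℕ))) := by
    intro m _ n _ hmn
    simp only [Function.onFun, Finset.disjoint_left]
    intro x hxm hxn
    rw [Finset.HasAntidiagonal.mem_antidiagonal] at hxm hxn
    exact hmn (hxm ▸ hxn)
  have step2 : (∑ n ∈ Finset.range p, ∑ x ∈ Finset.HasAntidiagonal.antidiagonal n, F x)
      = ∑ x ∈ (Finset.range p).biUnion (fun n => Finset.HasAntidiagonal.antidiagonal n), F x :=
    (Finset.sum_biUnion hdisj).symm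
  have hsub : (Finset.range p).biUnion (fun n => Finset.HasAntidiagonal.antidiagonal n)
      ⊆ Finset.range p ×ˢ Finset.range p := by
    intro x hx
    rcases Finset.mem_biUnion.mp hx with ⟨n, hn, hxn⟩
    rw [Finset.HasAntidiagonal.mem_antidiagonal] at hxn
    rw [Finset.mem_range] at hn
    rw [Finset.mem_product, Finset.mem_range, Finset.mem_range]
    omega
  have step3 : (∑ x ∈ (Finset.range p).biUnion (fun n => Finset.HasAntidiagonal.antidiagonal n), F x)
      = ∑ x ∈ Finset.range p ×ˢ Finset.range p, F x := by
    refine Finset.sum_subset hsub fun x hx hnx => ?_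
    have hxp : p ≤ x.1 + x.2 := by
      by_contra h
      push_neg at h
      exact hnx (Finset.mem_biUnion.mpr ⟨x.1 + x.2, Finset.mem_range.mpr h,
        Finset.HasAntidiagonal.mem_antidiagonal.mpr rfl⟩)
    have : F x = Ring.inverse ((x.1.factorial : R)) * Ring.inverse ((x.2.factorial : R))
        * (a ^ x.1 * b ^ x.2) := by simp only [hF]; ring
    rw [this, hzero _ _ hxp, mul_zero]
  have step4 : (∑ x ∈ Finset.range p ×ˢ Finset.range p, F x)
      = (∑ i ∈ Finset.range p, Ring.inverse ((i.factorial : R)) * a ^ i)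
        * (∑ i ∈ Finset.range p, Ring.inverse ((i.factorial : R)) * b ^ i) := by
    rw [Finset.sum_product, Finset.sum_mul_sum]
  rw [step1, step2, step3, step4]
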